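/- If A : 2^{<ω} → ℕ is upper semicomputable and Σ_{x ∈ 2^{<ω}} 2^{−A(x)} < ∞, then K(x) ≤ A(x) + O(1). -/

import Mathlib

open Set Filter

namespace KC

/-- Length of the binary string identified with the natural number `n`. -/
def len (n : ℕ) : ℕ := Nat.log 2 (n + 1)

/-- Complexity of `x` relative to machine `T`. -/
noncomputable def MachineCplx (T : ℕ →. ℕ) (x : ℕ) : ℕ := sInf {n | ∃ y, len y = n ∧ x ∈ T y}

/-- `U` is an optimal machine. -/
def Optimal (U : ℕ →. ℕ) : Prop :=
  Partrec U ∧ ∀ T : ℕ →. ℕ, Partrec T → ∃ c, ∀ x y, x ∈ T y → MachineCplx U x ≤ len y + c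

/-- Conditional complexity of `x` given `y` relative to machine `T`. -/
noncomputable def CondCplx (T : ℕ →. ℕ) (x y : ℕ) : ℕ :=
  sInf {n | ∃ z, len z = n ∧ x ∈ T (Nat.pair z y)}

/-- `U` is optimal as a conditional machine. -/
def CondOptimal (U : ℕ →. ℕ) : Prop :=
  Partrec U ∧ ∀ T : ℕ →. ℕ, Partrec T →
    ∃ c, ∀ x y z, x ∈ T (Nat.pair z y) → CondCplx U x y ≤ len z + c

/-- `y` is a prefix of `z` (as binary strings identified with naturals). -/
def IsPrefix (y z : ℕ) : Prop := ∃ k, (y + 1) * 2 ^ k ≤ z + 1 ∧ z + 1 < (y + 2) * 2 ^ k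

/-- A machine with prefix-free domain. -/
def PrefixFree (T : ℕ →. ℕ) : Prop :=
  ∀ y z, (T y).Dom → (T z).Dom → IsPrefix y z → y = z

/-- `U` is an optimal prefix-free machine. -/
def PrefixOptimal (U : ℕ →. ℕ) : Prop :=
  Partrec U ∧ PrefixFree U ∧ ∀ T : ℕ →. ℕ, Partrec T → PrefixFree T →
    ∃ c, ∀ x y, x ∈ T y → MachineCplx U x ≤ len y + c

/-- Upper semicomputability: `A` is a pointwise limit of a computable
nonincreasing sequence of approximations. -/
def UpperSemicomputable (A : ℕ → ℕ) : Prop :=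
  ∃ F : ℕ → ℕ → ℕ, Computable₂ F ∧ (∀ x, Antitone (F x)) ∧ ∀ x, A x = ⨅ s, F x s

/-- Uniform upper semicomputability for a two-argument function. -/
def UpperSemicomputable₂ (B : ℕ → ℕ → ℕ) : Prop :=
  UpperSemicomputable (fun p => B (Nat.unpair p).1 (Nat.unpair p).2)

/-- Solovay's function `α` built from a complexity function `K`. -/
noncomputable def solovay (K : ℕ → ℕ) (n : ℕ) : ℕ := sInf {m | ∃ i, n < i ∧ K i = m}

/-- An order: total, non-decreasing, unbounded. -/
def IsOrder (h : ℕ → ℕ) : Prop := Monotone h ∧ ∀ m, ∃ n, m ≤ h n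

/-- Sub-linearity: `f n = o(n)`. -/
def Sublinear (f : ℕ → ℕ) : Prop :=
  Tendsto (fun n => (f n : ℝ) / n) atTop (nhds 0)

/-- `p_f = max {n | f n ≥ n}`. -/
noncomputable def pstar (f : ℕ → ℕ) : ℕ := sSup {n | n ≤ f n}

/-- The star-operator: `f* n = min {k | f^[k] n ≤ p_f}`. -/
noncomputable def starOp (f : ℕ → ℕ) (n : ℕ) : ℕ := sInf {k | f^[k] n ≤ pstar f}

end KC

open KC

namespace KCP

open KC

lemma log_between {c k m : ℕ} (hc : 0 < c) (h1 : c * 2 ^ k ≤ m) (h2 : m < (c + 1) * 2 ^ k) :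
    Nat.log 2 m = Nat.log 2 c + k := by
  apply Nat.log_eq_of_pow_le_of_lt_pow
  · calc 2 ^ (Nat.log 2 c + k) = 2 ^ Nat.log 2 c * 2 ^ k := by rw [pow_add]
    _ ≤ c * 2 ^ k := Nat.mul_le_mul_right _ (Nat.pow_log_le_self 2 hc.ne')
    _ ≤ m := h1
  · have hlt : c < 2 ^ (Nat.log 2 c + 1) := Nat.lt_pow_succ_log_self one_lt_two c
    calc m < (c + 1) * 2 ^ k := h2
    _ ≤ 2 ^ (Nat.log 2 c + 1) * 2 ^ k := Nat.mul_le_mul_right _ hlt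
    _ = 2 ^ (Nat.log 2 c + k + 1) := by rw [← pow_add]; ring_nf

lemma isPrefix_of_div {a b k : ℕ} (h : (b + 1) / 2 ^ k = a + 1) : IsPrefix a b := by
  have hpos : 0 < 2 ^ k := Nat.pow_pos (n := k) (by norm_num)
  refine ⟨k, ?_, ?_⟩
  · calc (a + 1) * 2 ^ k = (b + 1) / 2 ^ k * 2 ^ k := by rw [h]
    _ ≤ b + 1 := Nat.div_mul_le_self _ _
  · have := Nat.div_add_mod (b + 1) (2 ^ k)
    have hm : (b + 1) % 2 ^ k < 2 ^ k := Nat.mod_lt _ hpos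
    nlinarith [this, hm, h]

lemma div_of_isPrefix {a b : ℕ} (h : IsPrefix a b) :
    ∃ k, (b + 1) / 2 ^ k = a + 1 ∧ len b = len a + k := by
  obtain ⟨k, h1, h2⟩ := h
  refine ⟨k, Nat.div_eq_of_lt_le h1 (by linarith [h2]), ?_⟩
  unfold len
  exact log_between (Nat.succ_pos a) h1 h2

lemma isPrefix_refl (a : ℕ) : IsPrefix a a := isPrefix_of_div (k := 0) (by simp)

lemma isPrefix_trans {a b c : ℕ} (h1 : IsPrefix a b) (h2 : IsPrefix b c) : IsPrefix a c := by
  obtain ⟨k1, e1, -⟩ := div_of_isPrefix h1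
  obtain ⟨k2, e2, -⟩ := div_of_isPrefix h2
  exact isPrefix_of_div (k := k2 + k1) (by rw [pow_add, ← Nat.div_div_eq_div_mul, e2, e1])

lemma isPrefix_len_le {a b : ℕ} (h : IsPrefix a b) : len a ≤ len b := by
  obtain ⟨k, -, hl⟩ := div_of_isPrefix h; omega

lemma isPrefix_comparable {a b c : ℕ} (h1 : IsPrefix a c) (h2 : IsPrefix b c) :
    IsPrefix a b ∨ IsPrefix b a := by
  obtain ⟨k1, e1, -⟩ := div_of_isPrefix h1
  obtain ⟨k2, e2, -⟩ := div_of_isPrefix h2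
  rcases le_total k1 k2 with h | h
  · right
    refine isPrefix_of_div (k := k2 - k1) ?_
    rw [← e1, Nat.div_div_eq_div_mul, ← pow_add, Nat.add_sub_cancel' h, e2]
  · left
    refine isPrefix_of_div (k := k1 - k2) ?_
    rw [← e2, Nat.div_div_eq_div_mul, ← pow_add, Nat.add_sub_cancel' h, e1]

lemma isPrefix_antisymm {a b : ℕ} (h1 : IsPrefix a b) (h2 : IsPrefix b a) : a = b := by
  obtain ⟨k1, e1, l1⟩ := div_of_isPrefix h1
  obtain ⟨k2, e2, l2⟩ := div_of_isPrefix h2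
  have : k1 = 0 := by omega
  subst this; simpa using e1.symm

/-- the codeword `(w+1)*2^k - 1` -/
lemma len_cw (w k : ℕ) : len ((w + 1) * 2 ^ k - 1) = len w + k := by
  have hpos : 0 < (w + 1) * 2 ^ k := Nat.mul_pos (Nat.succ_pos w) (Nat.pow_pos (n := k) (by norm_num))
  unfold len
  rw [Nat.sub_add_cancel hpos]
  exact log_between (Nat.succ_pos w) le_rfl (by nlinarith [Nat.pow_pos (n := k) (show 0 < 2 by norm_num)])

lemma succ_cw (w k : ℕ) : ((w + 1) * 2 ^ k - 1) + 1 = (w + 1) * 2 ^ k :=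
  Nat.sub_add_cancel (Nat.mul_pos (Nat.succ_pos w) (Nat.pow_pos (n := k) (by norm_num)))

lemma len_fj (w j : ℕ) : len ((w + 1) * 2 ^ (j + 1)) = len w + (j + 1) := by
  unfold len
  refine log_between (Nat.succ_pos w) ?_ ?_
  · nlinarith [Nat.pow_pos (n := (j+1)) (show 0 < 2 by norm_num)]
  · have : 1 < 2 ^ (j + 1) := Nat.one_lt_two_pow_iff.mpr (by omega)
    nlinarith

lemma pre_cw (w k : ℕ) : IsPrefix w ((w + 1) * 2 ^ k - 1) := by
  refine isPrefix_of_div (k := k) ?_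
  rw [succ_cw]
  exact Nat.mul_div_cancel _ (Nat.pow_pos (n := k) (by norm_num))

lemma pre_fj (w j : ℕ) : IsPrefix w ((w + 1) * 2 ^ (j + 1)) := by
  refine isPrefix_of_div (k := j + 1) ?_
  have h1 : 0 < 2 ^ (j + 1) := Nat.pow_pos (n := _) (by norm_num)
  have : (w + 1) * 2 ^ (j + 1) + 1 = 2 ^ (j + 1) * (w + 1) + 1 := by ring
  rw [this, Nat.mul_add_div h1]
  simp [Nat.div_eq_of_lt (Nat.one_lt_two_pow_iff.mpr (Nat.succ_ne_zero j))]

lemma not_pre_cw_fj {w k j : ℕ} (hj : j < k) :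
    ¬ IsPrefix ((w + 1) * 2 ^ k - 1) ((w + 1) * 2 ^ (j + 1)) := by
  intro h
  obtain ⟨k', e, hl⟩ := div_of_isPrefix h
  rw [len_fj, len_cw] at hl
  have hk' : k' = 0 := by omega
  have hkj : k = j + 1 := by omega
  subst hk' hkj
  rw [pow_zero, Nat.div_one, succ_cw] at e
  omega

lemma not_pre_fj_cw {w k j : ℕ} (hj : j < k) :
    ¬ IsPrefix ((w + 1) * 2 ^ (j + 1)) ((w + 1) * 2 ^ k - 1) := by
  intro h
  obtain ⟨k', e, hl⟩ := div_of_isPrefix h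
  rw [len_fj, len_cw] at hl
  have hk' : k' = k - j - 1 := by omega
  subst hk'
  rw [succ_cw] at e
  have hsplit : (w + 1) * 2 ^ k = ((w + 1) * 2 ^ (j + 1) + 1 - 1) * 2 ^ (k - j - 1) := by
    rw [Nat.add_sub_cancel, mul_assoc, ← pow_add]
    congr 2
    omega
  rw [hsplit, Nat.add_sub_cancel, Nat.mul_div_cancel _ (Nat.pow_pos (n := _) (by norm_num))] at e
  omega

lemma not_pre_fi_fj {w i j : ℕ} (hij : i ≠ j) :
    ¬ IsPrefix ((w + 1) * 2 ^ (i + 1)) ((w + 1) * 2 ^ (j + 1)) := by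
  intro h
  obtain ⟨k', e, hl⟩ := div_of_isPrefix h
  rw [len_fj, len_fj] at hl
  have hk' : k' = j - i := by omega
  have hij' : i < j := by omega
  subst hk'
  have hsplit : (w + 1) * 2 ^ (j + 1) + 1 = 2 ^ (j - i) * ((w + 1) * 2 ^ (i + 1)) + 1 := by
    rw [← mul_assoc, mul_comm (2 ^ (j - i)), mul_assoc, ← pow_add]
    congr 3
    omega
  have hpos : 0 < 2 ^ (j - i) := Nat.pow_pos (n := _) (by norm_num)
  have hdiv : ((w + 1) * 2 ^ (j + 1) + 1) / 2 ^ (j - i) = (w + 1) * 2 ^ (i + 1) := by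
    rw [hsplit, Nat.mul_add_div hpos,
      Nat.div_eq_of_lt (Nat.one_lt_two_pow_iff.mpr (show j - i ≠ 0 by omega))]
    omega
  rw [hdiv] at e
  omega


section Construction
variable (F : ℕ → ℕ → ℕ) (c0 : ℕ)

/-- request emitted at stage `t = pair x s`. -/
def reqv (t : ℕ) : Option (ℕ × ℕ) :=
  if t.unpair.2 = 0 then some (t.unpair.1, F t.unpair.1 0 + c0)
  else if F t.unpair.1 t.unpair.2 < F t.unpair.1 (t.unpair.2 - 1) then
    some (t.unpair.1, F t.unpair.1 t.unpair.2 + c0)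
  else none

end Construction

def pick (n : ℕ) (L : List (ℕ × ℕ)) : Option (ℕ × ℕ) :=
  L.foldr (fun p r => if p.2 ≤ n then some (r.elim p fun q => if q.2 ≤ p.2 then p else q) else r)
    none

def removeLen (l : ℕ) (L : List (ℕ × ℕ)) : List (ℕ × ℕ) :=
  L.foldr (fun p r => if p.2 = l then r else p :: r) []

def splits (n l w : ℕ) : List (ℕ × ℕ) :=
  (List.range (n - l)).map fun j => ((w + 1) * 2 ^ (j + 1), l + j + 1)

def padw (n l w : ℕ) : ℕ := (w + 1) * 2 ^ (n - l) - 1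

def stepState (o : Option (ℕ × ℕ)) (L : List (ℕ × ℕ)) : List (ℕ × ℕ) :=
  o.elim L fun q => (pick q.2 L).elim L fun p => splits q.2 p.2 p.1 ++ removeLen p.2 L

section Construction
variable (F : ℕ → ℕ → ℕ) (c0 : ℕ)

def state (t : ℕ) : List (ℕ × ℕ) :=
  Nat.rec [(0, 0)] (fun t' s => stepState (reqv F c0 t') s) t

@[simp] lemma state_zero : state F c0 0 = [(0, 0)] := rfl
lemma state_succ (t : ℕ) : state F c0 (t + 1) = stepState (reqv F c0 t) (state F c0 t) := rfl

def asg (t : ℕ) : Option (ℕ × ℕ) :=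
  (reqv F c0 t).bind fun q => (pick q.2 (state F c0 t)).map fun p => (padw q.2 p.2 p.1, q.1)

def codes (t : ℕ) : List ℕ :=
  Nat.rec [] (fun t' c => c ++ ((asg F c0 t').elim [] fun r => [r.1])) t

@[simp] lemma codes_zero : codes F c0 0 = [] := rfl
lemma codes_succ (t : ℕ) :
    codes F c0 (t + 1) = codes F c0 t ++ ((asg F c0 t).elim [] fun r => [r.1]) := rfl

def allStr (t : ℕ) : List ℕ := (state F c0 t).map Prod.fst ++ codes F c0 t

noncomputable def wt (t : ℕ) : ℝ := (reqv F c0 t).elim 0 fun q => (2 : ℝ)⁻¹ ^ q.2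

def machine : ℕ →. ℕ :=
  fun y => Nat.rfindOpt fun t => (asg F c0 t).bind fun r => if r.1 = y then some r.2 else none

lemma codes_mono {t t' : ℕ} (h : t ≤ t') : codes F c0 t ⊆ codes F c0 t' := by
  induction t' with
  | zero => simp_all
  | succ u ih =>
    rcases Nat.lt_or_ge t (u + 1) with h' | h'
    · intro a ha
      rw [codes_succ]
      exact List.mem_append_left _ (ih (by omega) ha)
    · have : t = u + 1 := by omega
      subst this; exact fun a ha => ha

end Construction

/- ## pick, removeLen, splits lemmas -/

lemma pick_eq_none {n : ℕ} {L : List (ℕ × ℕ)} (h : pick n L = none) : ∀ p ∈ L, ¬ p.2 ≤ n := by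
  induction L with
  | nil => simp
  | cons p L ih =>
    intro q hq
    unfold pick at h
    simp only [List.foldr_cons] at h
    by_cases hp : p.2 ≤ n
    · simp [hp] at h
    · simp only [hp, if_false] at h
      rcases List.mem_cons.1 hq with rfl | hq
      · exact hp
      · exact ih h q hq

lemma pick_spec {n : ℕ} {L : List (ℕ × ℕ)} {p : ℕ × ℕ} (h : pick n L = some p) :
    p ∈ L ∧ p.2 ≤ n ∧ ∀ q ∈ L, q.2 ≤ n → q.2 ≤ p.2 := by
  induction L generalizing p with
  | nil => simp [pick] at h
  | cons r L ih =>
    have hfold : pick n (r :: L) =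
        if r.2 ≤ n then some ((pick n L).elim r fun q => if q.2 ≤ r.2 then r else q)
        else pick n L := rfl
    rw [hfold] at h
    by_cases hr : r.2 ≤ n
    · simp only [hr, if_true, Option.some_inj] at h
      cases hL : pick n L with
      | none =>
        rw [hL] at h
        simp only [Option.elim] at h
        subst h
        exact ⟨List.mem_cons_self, hr, by
          intro q hq hqn
          rcases List.mem_cons.1 hq with rfl | hq
          · exact le_rfl
          · exact absurd hqn (pick_eq_none hL q hq)⟩
      | some p' =>
        rw [hL] at h
        obtain ⟨hp'm, hp'n, hp'max⟩ := ih hL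
        simp only [Option.elim] at h
        by_cases hc : p'.2 ≤ r.2
        · simp only [hc, if_true] at h
          subst h
          exact ⟨List.mem_cons_self, hr, by
            intro q hq hqn
            rcases List.mem_cons.1 hq with rfl | hq
            · exact le_rfl
            · exact le_trans (hp'max q hq hqn) hc⟩
        · simp only [hc, if_false] at h
          subst h
          exact ⟨List.mem_cons_of_mem _ hp'm, hp'n, by
            intro q hq hqn
            rcases List.mem_cons.1 hq with rfl | hq
            · omega
            · exact hp'max q hq hqn⟩
    · simp only [hr, if_false] at h
      obtain ⟨hm, hn, hmax⟩ := ih h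
      exact ⟨List.mem_cons_of_mem _ hm, hn, by
        intro q hq hqn
        rcases List.mem_cons.1 hq with rfl | hq
        · exact absurd hqn hr
        · exact hmax q hq hqn⟩

lemma removeLen_eq_filter (l : ℕ) (L : List (ℕ × ℕ)) :
    removeLen l L = L.filter (fun p => p.2 ≠ l) := by
  induction L with
  | nil => rfl
  | cons p L ih =>
    have : removeLen l (p :: L) = if p.2 = l then removeLen l L else p :: removeLen l L := rfl
    rw [this, ih]
    by_cases hp : p.2 = l <;> simp [List.filter_cons, hp]

lemma mem_removeLen {l : ℕ} {L : List (ℕ × ℕ)} {q : ℕ × ℕ} :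
    q ∈ removeLen l L ↔ q ∈ L ∧ q.2 ≠ l := by
  rw [removeLen_eq_filter]; simp

lemma removeLen_pairwise {l : ℕ} {L : List (ℕ × ℕ)} {R : ℕ × ℕ → ℕ × ℕ → Prop}
    (h : L.Pairwise R) : (removeLen l L).Pairwise R := by
  rw [removeLen_eq_filter]; exact h.filter _

lemma mem_splits {n l w : ℕ} {q : ℕ × ℕ} :
    q ∈ splits n l w ↔ ∃ j, j < n - l ∧ q = ((w + 1) * 2 ^ (j + 1), l + j + 1) := by
  simp only [splits, List.mem_map, List.mem_range]
  constructor
  · rintro ⟨j, hj, rfl⟩; exact ⟨j, hj, rfl⟩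
  · rintro ⟨j, hj, rfl⟩; exact ⟨j, hj, rfl⟩

/- ## mass lemmas -/

noncomputable def massOf (L : List (ℕ × ℕ)) : ℝ := (L.map fun p => (2 : ℝ)⁻¹ ^ p.2).sum

@[simp] lemma massOf_nil : massOf [] = 0 := rfl
lemma massOf_cons (p : ℕ × ℕ) (L : List (ℕ × ℕ)) :
    massOf (p :: L) = (2 : ℝ)⁻¹ ^ p.2 + massOf L := by simp [massOf]
lemma massOf_append (L M : List (ℕ × ℕ)) : massOf (L ++ M) = massOf L + massOf M := by
  simp [massOf]

lemma removeLen_of_not_mem {l : ℕ} {L : List (ℕ × ℕ)} (h : ∀ p ∈ L, p.2 ≠ l) :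
    removeLen l L = L := by
  rw [removeLen_eq_filter]
  exact List.filter_eq_self.2 (by intro p hp; simpa using h p hp)

lemma massOf_removeLen {l w : ℕ} {L : List (ℕ × ℕ)}
    (hpw : L.Pairwise (fun p q => p.2 ≠ q.2)) (hm : (w, l) ∈ L) :
    massOf (removeLen l L) = massOf L - (2 : ℝ)⁻¹ ^ l := by
  induction L with
  | nil => simp at hm
  | cons p L ih =>
    have hstep : removeLen l (p :: L) = if p.2 = l then removeLen l L else p :: removeLen l L :=
      rfl
    rcases List.pairwise_cons.1 hpw with ⟨hp, hpwL⟩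
    by_cases hc : p.2 = l
    · have : ∀ q ∈ L, q.2 ≠ l := fun q hq => by
        have := hp q hq; omega
      rw [hstep, if_pos hc, removeLen_of_not_mem this, massOf_cons, hc]
      ring
    · have hmL : (w, l) ∈ L := by
        rcases List.mem_cons.1 hm with h' | h'
        · rw [← h'] at hc; simp at hc
        · exact h'
      rw [hstep, if_neg hc, massOf_cons, massOf_cons, ih hpwL hmL]
      ring

lemma massOf_splits {n l w : ℕ} (h : l ≤ n) :
    massOf (splits n l w) = (2 : ℝ)⁻¹ ^ l - (2 : ℝ)⁻¹ ^ n := by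
  have key : ∀ k l' : ℕ, massOf ((List.range k).map fun j => ((w + 1) * 2 ^ (j + 1), l' + j + 1))
      = (2 : ℝ)⁻¹ ^ l' - (2 : ℝ)⁻¹ ^ (l' + k) := by
    intro k
    induction k with
    | zero => simp [massOf]
    | succ k ih =>
      intro l'
      rw [List.range_succ, List.map_append, massOf_append, ih]
      have h2 : (2 : ℝ)⁻¹ ^ (l' + k) = 2 * (2 : ℝ)⁻¹ ^ (l' + k + 1) := by
        rw [pow_succ]; ring
      simp only [massOf, List.map_cons, List.map_nil, List.sum_cons, List.sum_nil]
      rw [show l' + (k + 1) = l' + k + 1 from rfl]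
      linarith
  have := key (n - l) l
  rw [show l + (n - l) = n by omega] at this
  exact this.trans (by ring_nf)

lemma sum_pow_lt {a : ℕ} (S : Finset ℕ) (hS : ∀ l ∈ S, a ≤ l) :
    ∑ l ∈ S, (2 : ℝ)⁻¹ ^ l < 2 * (2 : ℝ)⁻¹ ^ a := by
  set M := max (S.sup id + 1) a with hM
  have hsub : S ⊆ Finset.Ico a M := by
    intro l hl
    simp only [Finset.mem_Ico]
    exact ⟨hS l hl, lt_of_le_of_lt (Finset.le_sup (f := id) hl) (by omega)⟩
  have h1 : ∑ l ∈ S, (2 : ℝ)⁻¹ ^ l ≤ ∑ l ∈ Finset.Ico a M, (2 : ℝ)⁻¹ ^ l :=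
    Finset.sum_le_sum_of_subset_of_nonneg hsub (by intros; positivity)
  have h2 : ∑ l ∈ Finset.Ico a M, (2 : ℝ)⁻¹ ^ l =
      ((2 : ℝ)⁻¹ ^ M - (2 : ℝ)⁻¹ ^ a) / ((2 : ℝ)⁻¹ - 1) :=
    geom_sum_Ico (by norm_num) (le_max_right _ _)
  have h3 : ((2 : ℝ)⁻¹ ^ M - (2 : ℝ)⁻¹ ^ a) / ((2 : ℝ)⁻¹ - 1) =
      2 * (2 : ℝ)⁻¹ ^ a - 2 * (2 : ℝ)⁻¹ ^ M := by
    field_simp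
    ring
  have h4 : (0 : ℝ) < (2 : ℝ)⁻¹ ^ M := by positivity
  linarith

lemma massOf_lt {a : ℕ} {L : List (ℕ × ℕ)} (hpw : L.Pairwise (fun p q => p.2 ≠ q.2))
    (hlow : ∀ p ∈ L, a ≤ p.2) : massOf L < 2 * (2 : ℝ)⁻¹ ^ a := by
  have hnd : (L.map Prod.snd).Nodup := List.pairwise_map.2 hpw
  have h1 : massOf L = ∑ l ∈ (L.map Prod.snd).toFinset, (2 : ℝ)⁻¹ ^ l := by
    rw [List.sum_toFinset _ hnd, massOf, List.map_map]
    rfl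
  rw [h1]
  apply sum_pow_lt
  intro l hl
  rw [List.mem_toFinset, List.mem_map] at hl
  obtain ⟨p, hp, rfl⟩ := hl
  exact hlow p hp

/- ## The invariant -/

section Invariant
variable (F : ℕ → ℕ → ℕ) (c0 : ℕ)

noncomputable def G (N : ℕ) : ℝ := ∑ t ∈ Finset.range N, wt F c0 t

lemma G_succ (t : ℕ) : G F c0 (t + 1) = G F c0 t + wt F c0 t := Finset.sum_range_succ _ _

structure StInv (t : ℕ) : Prop where
  pw : (state F c0 t).Pairwise (fun p q => p.2 ≠ q.2)
  lens : ∀ p ∈ state F c0 t, KC.len p.1 = p.2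
  mass : massOf (state F c0 t) = 1 - G F c0 t
  anti : ∀ u ∈ allStr F c0 t, ∀ v ∈ allStr F c0 t, KC.IsPrefix u v → u = v
  disj : ∀ p ∈ state F c0 t, p.1 ∉ codes F c0 t

lemma stinv_zero : StInv F c0 0 where
  pw := by simp
  lens := by simp [KC.len]
  mass := by simp [massOf, G]
  anti := by
    intro u hu v hv _
    simp [allStr] at hu hv
    omega
  disj := by simp

variable {F c0}

lemma serve {t x n : ℕ} (hb : ∀ N, G F c0 N ≤ 1) (H : StInv F c0 t)
    (h : reqv F c0 t = some (x, n)) : ∃ p, pick n (state F c0 t) = some p := by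
  have hwt : wt F c0 t = (2 : ℝ)⁻¹ ^ n := by simp [wt, h]
  have h1 : G F c0 t + (2 : ℝ)⁻¹ ^ n ≤ 1 := by
    have := hb (t + 1); rw [G_succ, hwt] at this; linarith
  have hmass : (2 : ℝ)⁻¹ ^ n ≤ massOf (state F c0 t) := by rw [H.mass]; linarith
  cases hp : pick n (state F c0 t) with
  | some p => exact ⟨p, rfl⟩
  | none =>
    exfalso
    have hall : ∀ p ∈ state F c0 t, n + 1 ≤ p.2 := by
      intro p hpm
      have := pick_eq_none hp p hpm; omega
    have := massOf_lt H.pw hall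
    have h2 : 2 * (2 : ℝ)⁻¹ ^ (n + 1) = (2 : ℝ)⁻¹ ^ n := by rw [pow_succ]; ring
    linarith

lemma stinv_step (hb : ∀ N, G F c0 N ≤ 1) {t : ℕ} (H : StInv F c0 t) : StInv F c0 (t + 1) := by
  cases hreq : reqv F c0 t with
  | none =>
    have hst : state F c0 (t + 1) = state F c0 t := by
      rw [state_succ, hreq]; rfl
    have hasg : asg F c0 t = none := by simp [asg, hreq]
    have hcd : codes F c0 (t + 1) = codes F c0 t := by
      rw [codes_succ, hasg]; simp
    have hwt : wt F c0 t = 0 := by simp [wt, hreq]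
    have hall : allStr F c0 (t + 1) = allStr F c0 t := by rw [allStr, hst, hcd]; rfl
    exact ⟨by rw [hst]; exact H.pw, by rw [hst]; exact H.lens,
      by rw [hst, G_succ, hwt, H.mass]; ring,
      by rw [hall]; exact H.anti, by rw [hst, hcd]; exact H.disj⟩
  | some q =>
    obtain ⟨x, n⟩ := q
    obtain ⟨p, hpick⟩ := serve hb H hreq
    obtain ⟨hmem, hln, hmax⟩ := pick_spec hpick
    obtain ⟨w, l⟩ := p
    simp only at hln hmax
    have hlw : KC.len w = l := H.lens (w, l) hmem
    set k := n - l with hk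
    set cw := padw n l w with hcw
    have hst : state F c0 (t + 1) = splits n l w ++ removeLen l (state F c0 t) := by
      rw [state_succ, hreq]
      simp [stepState, hpick]
    have hasg : asg F c0 t = some (cw, x) := by simp [asg, hreq, hpick, hcw]
    have hcd : codes F c0 (t + 1) = codes F c0 t ++ [cw] := by rw [codes_succ, hasg]; rfl
    have hwt : wt F c0 t = (2 : ℝ)⁻¹ ^ n := by simp [wt, hreq]
    -- splits membership shape
    have hsplit_mem : ∀ r ∈ splits n l w, ∃ j, j < k ∧ r = ((w + 1) * 2 ^ (j + 1), l + j + 1) :=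
      fun r hr => mem_splits.1 hr
    -- prefix facts
    have hpre_cw : KC.IsPrefix w cw := KCP.pre_cw w k
    have hpre_f : ∀ j, KC.IsPrefix w ((w + 1) * 2 ^ (j + 1)) := fun j => KCP.pre_fj w j
    have hwmem : w ∈ allStr F c0 t :=
      List.mem_append_left _ (List.mem_map.2 ⟨(w, l), hmem, rfl⟩)
    -- w is not among the surviving old strings
    have hw_not_old : ∀ u, (u ∈ (removeLen l (state F c0 t)).map Prod.fst ∨
        u ∈ codes F c0 t) → u ≠ w := by
      intro u hu hequ
      rw [hequ] at hu
      rcases hu with hu | hu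
      · obtain ⟨r, hr, hru⟩ := List.mem_map.1 hu
        obtain ⟨hrs, hrl⟩ := mem_removeLen.1 hr
        have := H.lens r hrs
        rw [hru, hlw] at this
        exact hrl this.symm
      · exact H.disj (w, l) hmem hu
    -- batch: cw and the splits strings; pairwise prefix ⇒ equal
    have hbatch : ∀ u, (u = cw ∨ u ∈ (splits n l w).map Prod.fst) →
        ∀ v, (v = cw ∨ v ∈ (splits n l w).map Prod.fst) → KC.IsPrefix u v → u = v := by
      rintro u hu v hv hpre
      rcases hu with rfl | hu <;> rcases hv with rfl | hv
      · rfl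
      · obtain ⟨r, hr, rfl⟩ := List.mem_map.1 hv
        obtain ⟨j, hj, rfl⟩ := hsplit_mem r hr
        exact absurd hpre (KCP.not_pre_cw_fj hj)
      · obtain ⟨r, hr, rfl⟩ := List.mem_map.1 hu
        obtain ⟨j, hj, rfl⟩ := hsplit_mem r hr
        exact absurd hpre (KCP.not_pre_fj_cw hj)
      · obtain ⟨r, hr, rfl⟩ := List.mem_map.1 hu
        obtain ⟨r', hr', rfl⟩ := List.mem_map.1 hv
        obtain ⟨j, hj, rfl⟩ := hsplit_mem r hr
        obtain ⟨j', hj', rfl⟩ := hsplit_mem r' hr'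
        by_cases hjj : j = j'
        · subst hjj; rfl
        · exact absurd hpre (KCP.not_pre_fi_fj hjj)
    have hbatch_pre : ∀ u, (u = cw ∨ u ∈ (splits n l w).map Prod.fst) → KC.IsPrefix w u := by
      rintro u (rfl | hu)
      · exact hpre_cw
      · obtain ⟨r, hr, rfl⟩ := List.mem_map.1 hu
        obtain ⟨j, hj, rfl⟩ := hsplit_mem r hr
        exact hpre_f j
    -- membership decomposition of allStr (t+1)
    have hmem_succ : ∀ u, u ∈ allStr F c0 (t + 1) ↔
        ((u = cw ∨ u ∈ (splits n l w).map Prod.fst) ∨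
         (u ∈ (removeLen l (state F c0 t)).map Prod.fst ∨ u ∈ codes F c0 t)) := by
      intro u
      rw [allStr, hst, hcd, List.map_append]
      simp only [List.mem_append, List.mem_singleton]
      tauto
    have hold_sub : ∀ u, (u ∈ (removeLen l (state F c0 t)).map Prod.fst ∨
        u ∈ codes F c0 t) → u ∈ allStr F c0 t := by
      rintro u (hu | hu)
      · obtain ⟨r, hr, rfl⟩ := List.mem_map.1 hu
        exact List.mem_append_left _ (List.mem_map.2 ⟨r, (mem_removeLen.1 hr).1, rfl⟩)
      · exact List.mem_append_right _ hu
    refine ⟨?_, ?_, ?_, ?_, ?_⟩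
    · -- pairwise distinct lengths
      rw [hst]
      rw [List.pairwise_append]
      refine ⟨?_, removeLen_pairwise H.pw, ?_⟩
      · -- splits pairwise
        unfold splits
        rw [List.pairwise_map]
        exact List.pairwise_lt_range |>.imp (by intro a b h; dsimp only; omega)
      · intro r hr r' hr'
        obtain ⟨j, hj, rfl⟩ := hsplit_mem r hr
        obtain ⟨hrs, hrl⟩ := mem_removeLen.1 hr'
        simp only
        by_cases hle : r'.2 ≤ n
        · have := hmax r' hrs hle; omega
        · omega
    · -- lengths correct
      rw [hst]
      intro r hr
      rcases List.mem_append.1 hr with hr | hr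
      · obtain ⟨j, hj, rfl⟩ := hsplit_mem r hr
        simp only
        rw [KCP.len_fj, hlw]; omega
      · exact H.lens r (mem_removeLen.1 hr).1
    · -- mass
      rw [hst, massOf_append, massOf_splits hln, massOf_removeLen H.pw hmem, H.mass,
        G_succ, hwt]
      ring
    · -- antichain
      intro u hu v hv hpre
      rcases (hmem_succ u).1 hu with hu' | hu' <;> rcases (hmem_succ v).1 hv with hv' | hv'
      · exact hbatch u hu' v hv' hpre
      · -- u batch, v old
        exfalso
        have h1 : KC.IsPrefix w v := KCP.isPrefix_trans (hbatch_pre u hu') hpre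
        have := H.anti w hwmem v (hold_sub v hv') h1
        exact hw_not_old v hv' this.symm
      · -- u old, v batch
        exfalso
        have h1 : KC.IsPrefix w v := hbatch_pre v hv'
        rcases KCP.isPrefix_comparable hpre h1 with h2 | h2
        · have := H.anti u (hold_sub u hu') w hwmem h2
          exact hw_not_old u hu' this
        · have := H.anti w hwmem u (hold_sub u hu') h2
          exact hw_not_old u hu' this.symm
      · exact H.anti u (hold_sub u hu') v (hold_sub v hv') hpre
    · -- disjointness of frees and codes
      intro r hr hrc
      rw [hcd] at hrc
      rw [hst] at hr
      have hr1 : r.1 = cw ∨ r.1 ∈ (splits n l w).map Prod.fst ∨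
          r.1 ∈ (removeLen l (state F c0 t)).map Prod.fst := by
        rcases List.mem_append.1 hr with h' | h'
        · exact Or.inr (Or.inl (List.mem_map.2 ⟨r, h', rfl⟩))
        · exact Or.inr (Or.inr (List.mem_map.2 ⟨r, h', rfl⟩))
      rcases List.mem_append.1 hrc with hrc | hrc
      · -- r.1 ∈ codes t
        rcases List.mem_append.1 hr with h' | h'
        · -- r from splits: then w prefix of r.1, both in allStr t ⇒ w = r.1 ∈ codes t, contra
          obtain ⟨j, hj, rfl⟩ := hsplit_mem r h'
          have h1 : KC.IsPrefix w ((w + 1) * 2 ^ (j + 1)) := hpre_f j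
          have := H.anti w hwmem _ (List.mem_append_right _ hrc) h1
          rw [← this] at hrc
          exact H.disj (w, l) hmem hrc
        · exact H.disj r (mem_removeLen.1 h').1 hrc
      · -- r.1 = cw
        have hr1cw : r.1 = cw := by simpa using hrc
        rcases List.mem_append.1 hr with h' | h'
        · -- r from splits: but cw is not a split string
          obtain ⟨j, hj, rfl⟩ := hsplit_mem r h'
          simp only at hr1cw
          have : KC.IsPrefix cw ((w + 1) * 2 ^ (j + 1)) := by
            rw [← hr1cw]; exact KCP.isPrefix_refl _
          exact KCP.not_pre_cw_fj hj this
        · -- r old surviving: r.1 = cw, w prefix cw so w, r.1 ∈ allStr t ⇒ w = r.1,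
          -- but r survives removeLen so r.2 ≠ l while len r.1 = len w = l
          have hrs := mem_removeLen.1 h'
          have h1 : KC.IsPrefix w r.1 := by rw [hr1cw]; exact hpre_cw
          have h2 := H.anti w hwmem r.1
            (List.mem_append_left _ (List.mem_map.2 ⟨r, hrs.1, rfl⟩)) h1
          have h3 := H.lens r hrs.1
          rw [← h2, hlw] at h3
          exact hrs.2 h3.symm

lemma stinv_all (hb : ∀ N, G F c0 N ≤ 1) : ∀ t, StInv F c0 t := by
  intro t
  induction t with
  | zero => exact stinv_zero F c0
  | succ u ih => exact stinv_step hb ih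

end Invariant

/- ## machine lemmas -/

section MachineLemmas
variable {F : ℕ → ℕ → ℕ} {c0 : ℕ}

lemma asg_not_mem_codes {t y x : ℕ} (H : StInv F c0 t) (h : asg F c0 t = some (y, x)) :
    y ∉ codes F c0 t := by
  intro hyc
  rw [asg] at h
  rcases hreqe : reqv F c0 t with _ | q
  · rw [hreqe] at h; simp at h
  · rw [hreqe] at h
    simp only [Option.bind_some] at h
    rcases hpicke : pick q.2 (state F c0 t) with _ | p
    · rw [hpicke] at h; simp at h
    · rw [hpicke] at h
      simp only [Option.map_some, Option.some_inj] at h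
      have hy : padw q.2 p.2 p.1 = y := congrArg Prod.fst h
      obtain ⟨hmem, -, -⟩ := pick_spec hpicke
      have hpre : KC.IsPrefix p.1 y := by
        rw [← hy, padw]
        exact KCP.pre_cw _ _
      have hp1 : p.1 ∈ allStr F c0 t :=
        List.mem_append_left _ (List.mem_map.2 ⟨p, hmem, rfl⟩)
      have heq := H.anti p.1 hp1 y (List.mem_append_right _ hyc) hpre
      exact H.disj p hmem (heq ▸ hyc)

lemma asg_of_req {t x n : ℕ} (hb : ∀ N, G F c0 N ≤ 1) (H : StInv F c0 t)
    (h : reqv F c0 t = some (x, n)) :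
    ∃ y, asg F c0 t = some (y, x) ∧ KC.len y = n := by
  obtain ⟨p, hpick⟩ := serve hb H h
  refine ⟨padw n p.2 p.1, by simp [asg, h, hpick], ?_⟩
  obtain ⟨hmem, hln, -⟩ := pick_spec hpick
  have hl : KC.len p.1 = p.2 := H.lens p hmem
  rw [padw, KCP.len_cw, hl]
  omega

lemma asg_mem_codes_succ {t y x : ℕ} (h : asg F c0 t = some (y, x)) :
    y ∈ codes F c0 (t + 1) := by
  rw [codes_succ, h]
  simp

lemma asg_unique (hb : ∀ N, G F c0 N ≤ 1) {t t' y x x' : ℕ} (h : asg F c0 t = some (y, x))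
    (h' : asg F c0 t' = some (y, x')) : t = t' ∧ x = x' := by
  have key : ∀ {a b : ℕ} {xa xb : ℕ}, a < b → asg F c0 a = some (y, xa) →
      asg F c0 b = some (y, xb) → False := by
    intro a b xa xb hab ha hbb
    have h1 : y ∈ codes F c0 (a + 1) := asg_mem_codes_succ ha
    have h2 : y ∈ codes F c0 b := codes_mono F c0 (by omega) h1
    exact asg_not_mem_codes (stinv_all hb b) hbb h2
  rcases lt_trichotomy t t' with hl | rfl | hl
  · exact (key hl h h').elim
  · rw [h] at h'
    have := Option.some_inj.1 h'
    exact ⟨rfl, (Prod.ext_iff.1 this).2⟩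
  · exact (key hl h' h).elim

lemma mem_machine (hb : ∀ N, G F c0 N ≤ 1) {t y x : ℕ} (h : asg F c0 t = some (y, x)) :
    x ∈ machine F c0 y := by
  have hdom : (machine F c0 y).Dom := by
    rw [machine, Nat.rfindOpt_dom]
    exact ⟨t, x, by simp [h]⟩
  obtain ⟨t', ha⟩ := Nat.rfindOpt_spec (Part.get_mem hdom)
  simp only [Option.mem_def, Option.bind_eq_some_iff] at ha
  obtain ⟨r, hr, hif⟩ := ha
  by_cases h1 : r.1 = y
  · rw [if_pos h1] at hif
    have hr' : asg F c0 t' = some (y, r.2) := by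
      rw [← h1]; rw [hr]
    obtain ⟨-, hx⟩ := asg_unique hb h hr'
    have : (machine F c0 y).get hdom = x := by
      rw [hx]
      exact (Option.some_inj.1 hif).symm
    exact this ▸ Part.get_mem hdom
  · rw [if_neg h1] at hif
    simp at hif

lemma machine_dom_code {y : ℕ} (hd : (machine F c0 y).Dom) :
    ∃ t x, asg F c0 t = some (y, x) := by
  rw [machine, Nat.rfindOpt_dom] at hd
  obtain ⟨t, a, ha⟩ := hd
  simp only [Option.mem_def, Option.bind_eq_some_iff] at ha
  obtain ⟨r, hr, hif⟩ := ha
  by_cases h1 : r.1 = y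
  · refine ⟨t, r.2, ?_⟩
    rw [← h1, hr]
  · rw [if_neg h1] at hif
    simp at hif

lemma machine_prefixFree (hb : ∀ N, G F c0 N ≤ 1) : KC.PrefixFree (machine F c0) := by
  intro y z hy hz hpre
  obtain ⟨t1, x1, h1⟩ := machine_dom_code hy
  obtain ⟨t2, x2, h2⟩ := machine_dom_code hz
  have hy' : y ∈ codes F c0 (max t1 t2 + 1) :=
    codes_mono F c0 (by omega) (asg_mem_codes_succ h1)
  have hz' : z ∈ codes F c0 (max t1 t2 + 1) :=
    codes_mono F c0 (by omega) (asg_mem_codes_succ h2)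
  exact (stinv_all hb (max t1 t2 + 1)).anti y (List.mem_append_right _ hy') z
    (List.mem_append_right _ hz') hpre

end MachineLemmas

/- ## the weight bound -/

section Bound
variable {F : ℕ → ℕ → ℕ} {c0 : ℕ} {A : ℕ → ℕ}

lemma wt_nonneg (F : ℕ → ℕ → ℕ) (c0 t : ℕ) : 0 ≤ wt F c0 t := by
  unfold wt
  cases reqv F c0 t with
  | none => simp
  | some q => simp only [Option.elim]; positivity

lemma wt_pair (F : ℕ → ℕ → ℕ) (c0 x s : ℕ) :
    wt F c0 (Nat.pair x s) =
      if s = 0 ∨ F x s < F x (s - 1) then (2 : ℝ)⁻¹ ^ (F x s + c0) else 0 := by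
  unfold wt reqv
  rw [Nat.unpair_pair]
  by_cases h0 : s = 0
  · subst h0; simp
  · simp only [h0, if_false]
    by_cases h1 : F x s < F x (s - 1) <;> simp [h0, h1]

lemma inner_bound {x a : ℕ} (hA : Antitone (F x)) (ha : ∀ s, a ≤ F x s) (N : ℕ) :
    ∑ s ∈ Finset.range N, wt F c0 (Nat.pair x s) ≤ 2 * (2 : ℝ)⁻¹ ^ (a + c0) := by
  classical
  set P : ℕ → Prop := fun s => s = 0 ∨ F x s < F x (s - 1) with hP
  have h1 : ∑ s ∈ Finset.range N, wt F c0 (Nat.pair x s) =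
      ∑ s ∈ (Finset.range N).filter P, (2 : ℝ)⁻¹ ^ (F x s + c0) := by
    rw [Finset.sum_filter]
    exact Finset.sum_congr rfl fun s _ => wt_pair F c0 x s
  set E := (Finset.range N).filter P with hE
  have hinj : ∀ s ∈ E, ∀ s' ∈ E, F x s = F x s' → s = s' := by
    intro s hs s' hs' heq
    by_contra hne
    rcases Nat.lt_or_ge s s' with hlt | hge
    · have hs'P : P s' := (Finset.mem_filter.1 hs').2
      have hs'0 : s' ≠ 0 := by omega
      have : F x s' < F x (s' - 1) := by rcases hs'P with h | h; omega; exact h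
      have : F x (s' - 1) ≤ F x s := hA (by omega)
      omega
    · have hlt : s' < s := by omega
      have hsP : P s := (Finset.mem_filter.1 hs).2
      have hs0 : s ≠ 0 := by omega
      have : F x s < F x (s - 1) := by rcases hsP with h | h; omega; exact h
      have : F x (s - 1) ≤ F x s' := hA (by omega)
      omega
  have h2 : ∑ s ∈ E, (2 : ℝ)⁻¹ ^ (F x s + c0) =
      ∑ m ∈ E.image (F x), (2 : ℝ)⁻¹ ^ (m + c0) :=
    (Finset.sum_image (f := fun m => (2 : ℝ)⁻¹ ^ (m + c0)) (g := F x) hinj).symm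
  have h3 : ∑ m ∈ E.image (F x), (2 : ℝ)⁻¹ ^ (m + c0) =
      (∑ m ∈ E.image (F x), (2 : ℝ)⁻¹ ^ m) * (2 : ℝ)⁻¹ ^ c0 := by
    rw [Finset.sum_mul]
    exact Finset.sum_congr rfl fun m _ => by rw [pow_add]
  have h4 : ∑ m ∈ E.image (F x), (2 : ℝ)⁻¹ ^ m ≤ 2 * (2 : ℝ)⁻¹ ^ a := by
    refine le_of_lt (sum_pow_lt _ ?_)
    intro m hm
    obtain ⟨s, -, rfl⟩ := Finset.mem_image.1 hm
    exact ha s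
  have h5 : (0 : ℝ) ≤ (2 : ℝ)⁻¹ ^ c0 := by positivity
  calc ∑ s ∈ Finset.range N, wt F c0 (Nat.pair x s)
      = ∑ m ∈ E.image (F x), (2 : ℝ)⁻¹ ^ (m + c0) := by rw [h1, h2]
    _ = (∑ m ∈ E.image (F x), (2 : ℝ)⁻¹ ^ m) * (2 : ℝ)⁻¹ ^ c0 := h3
    _ ≤ (2 * (2 : ℝ)⁻¹ ^ a) * (2 : ℝ)⁻¹ ^ c0 := by
        exact mul_le_mul_of_nonneg_right h4 h5
    _ = 2 * (2 : ℝ)⁻¹ ^ (a + c0) := by rw [pow_add]; ring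

lemma G_le_one (hA : ∀ x, Antitone (F x)) (hAF : ∀ x s, A x ≤ F x s)
    (h2 : Summable fun x : ℕ => (2 : ℝ)⁻¹ ^ A x)
    (hc0 : 2 * (∑' x : ℕ, (2 : ℝ)⁻¹ ^ A x) ≤ 2 ^ c0) : ∀ N, G F c0 N ≤ 1 := by
  intro N
  have step1 : G F c0 N ≤ ∑ p ∈ Finset.range N ×ˢ Finset.range N, wt F c0 (Nat.pair p.1 p.2) := by
    rw [G]
    have hsub : Finset.range N ⊆
        (Finset.range N ×ˢ Finset.range N).image fun p : ℕ × ℕ => Nat.pair p.1 p.2 := by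
      intro t ht
      simp only [Finset.mem_image, Finset.mem_product, Finset.mem_range]
      exact ⟨(t.unpair.1, t.unpair.2),
        ⟨lt_of_le_of_lt (Nat.unpair_left_le t) (Finset.mem_range.1 ht),
         lt_of_le_of_lt (Nat.unpair_right_le t) (Finset.mem_range.1 ht)⟩,
        Nat.pair_unpair t⟩
    calc ∑ t ∈ Finset.range N, wt F c0 t
        ≤ ∑ t ∈ (Finset.range N ×ˢ Finset.range N).image
            (fun p : ℕ × ℕ => Nat.pair p.1 p.2), wt F c0 t :=
          Finset.sum_le_sum_of_subset_of_nonneg hsub fun i _ _ => wt_nonneg F c0 i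
      _ = ∑ p ∈ Finset.range N ×ˢ Finset.range N, wt F c0 (Nat.pair p.1 p.2) :=
          Finset.sum_image (by
            intro p _ q _ hpq
            have := Nat.pair_eq_pair.1 hpq
            exact Prod.ext this.1 this.2)
  have step2 : ∑ p ∈ Finset.range N ×ˢ Finset.range N, wt F c0 (Nat.pair p.1 p.2) =
      ∑ x ∈ Finset.range N, ∑ s ∈ Finset.range N, wt F c0 (Nat.pair x s) :=
    Finset.sum_product _ _ _
  have step3 : ∑ x ∈ Finset.range N, ∑ s ∈ Finset.range N, wt F c0 (Nat.pair x s) ≤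
      ∑ x ∈ Finset.range N, 2 * (2 : ℝ)⁻¹ ^ (A x + c0) :=
    Finset.sum_le_sum fun x _ => inner_bound (hA x) (hAF x) N
  have step4 : ∑ x ∈ Finset.range N, 2 * (2 : ℝ)⁻¹ ^ (A x + c0) =
      (2 * (2 : ℝ)⁻¹ ^ c0) * ∑ x ∈ Finset.range N, (2 : ℝ)⁻¹ ^ A x := by
    rw [Finset.mul_sum]
    exact Finset.sum_congr rfl fun x _ => by rw [pow_add]; ring
  have step5 : ∑ x ∈ Finset.range N, (2 : ℝ)⁻¹ ^ A x ≤ ∑' x : ℕ, (2 : ℝ)⁻¹ ^ A x :=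
    Summable.sum_le_tsum _ (fun i _ => by positivity) h2
  have hpow : (0 : ℝ) < 2 ^ c0 := by positivity
  have step6 : (2 * (2 : ℝ)⁻¹ ^ c0) * (∑' x : ℕ, (2 : ℝ)⁻¹ ^ A x) ≤ 1 := by
    rw [inv_pow]
    rw [mul_comm (2 : ℝ), mul_assoc]
    rw [inv_mul_le_iff₀ hpow]
    simpa [mul_comm] using hc0
  have hnn : (0 : ℝ) ≤ 2 * (2 : ℝ)⁻¹ ^ c0 := by positivity
  calc G F c0 N ≤ ∑ x ∈ Finset.range N, 2 * (2 : ℝ)⁻¹ ^ (A x + c0) := by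
        rw [← step4] at *
        linarith [step1, step2.le, step3]
    _ = (2 * (2 : ℝ)⁻¹ ^ c0) * ∑ x ∈ Finset.range N, (2 : ℝ)⁻¹ ^ A x := step4
    _ ≤ (2 * (2 : ℝ)⁻¹ ^ c0) * (∑' x : ℕ, (2 : ℝ)⁻¹ ^ A x) :=
        mul_le_mul_of_nonneg_left step5 hnn
    _ ≤ 1 := step6

lemma req_exists (hA : ∀ x, Antitone (F x)) (hAx : ∀ x, A x = ⨅ s, F x s) (c0 x : ℕ) :
    ∃ t, reqv F c0 t = some (x, A x + c0) := by
  have hne : ∃ s, F x s = A x := by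
    obtain ⟨s, hs⟩ := Nat.sInf_mem (Set.range_nonempty fun s => F x s)
    exact ⟨s, by rw [hAx x, iInf]; exact hs⟩
  have hlow : ∀ s, A x ≤ F x s := fun s => by
    rw [hAx x, iInf]; exact Nat.sInf_le ⟨s, rfl⟩
  set s0 := Nat.find hne with hs0
  refine ⟨Nat.pair x s0, ?_⟩
  unfold reqv
  rw [Nat.unpair_pair]
  by_cases h0 : s0 = 0
  · simp only [h0, if_true, ite_true, eq_self_iff_true]
    have : F x 0 = A x := h0 ▸ Nat.find_spec hne
    rw [this]
  · have hspec : F x s0 = A x := Nat.find_spec hne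
    have hmin : F x (s0 - 1) ≠ A x := Nat.find_min hne (by omega)
    have hge : A x ≤ F x (s0 - 1) := hlow _
    have hlt : F x s0 < F x (s0 - 1) := by omega
    simp only [h0, if_false, hlt, if_true, ite_true]
    rw [hspec]

end Bound

/- ## computability -/

section Computability
open Primrec

lemma pow_primrec : Primrec₂ fun a b : ℕ => a ^ b := by
  have h : Primrec fun p : ℕ × ℕ =>
      Nat.rec (motive := fun _ => ℕ) 1 (fun _ IH => IH * p.1) p.2 :=
    Primrec.nat_rec' Primrec.snd (Primrec.const 1)
      ((Primrec.nat_mul.comp (Primrec.snd.comp Primrec.snd)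
        (Primrec.fst.comp Primrec.fst)).to₂)
  have h2 : Primrec fun p : ℕ × ℕ => p.1 ^ p.2 := by
    refine h.of_eq ?_
    rintro ⟨a, b⟩
    induction b with
    | zero => rfl
    | succ b ih => rw [pow_succ, ← ih]
  exact h2.to₂

lemma pick_primrec : Primrec₂ pick := by
  have hstep : Primrec₂ fun (a : ℕ × List (ℕ × ℕ)) (z : (ℕ × ℕ) × Option (ℕ × ℕ)) =>
      if z.1.2 ≤ a.1 then
        some (z.2.elim z.1 fun q => if q.2 ≤ z.1.2 then z.1 else q)
      else z.2 := by
    refine Primrec.ite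
      (PrimrecRel.comp Primrec.nat_le
        (Primrec.snd.comp (Primrec.fst.comp Primrec.snd)) (Primrec.fst.comp Primrec.fst))
      (Primrec.option_some.comp ?_) (Primrec.snd.comp Primrec.snd)
    have := Primrec.option_casesOn
      (o := fun w : (ℕ × List (ℕ × ℕ)) × ((ℕ × ℕ) × Option (ℕ × ℕ)) => w.2.2)
      (f := fun w => w.2.1)
      (g := fun w (q : ℕ × ℕ) => if q.2 ≤ w.2.1.2 then w.2.1 else q)
      (Primrec.snd.comp Primrec.snd) (Primrec.fst.comp Primrec.snd)
      (Primrec.ite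
        (PrimrecRel.comp Primrec.nat_le (Primrec.snd.comp Primrec.snd)
          (Primrec.snd.comp (Primrec.fst.comp (Primrec.snd.comp Primrec.fst))))
        (Primrec.fst.comp (Primrec.snd.comp Primrec.fst)) Primrec.snd).to₂
    refine this.of_eq ?_
    rintro ⟨⟨n, L⟩, ⟨p, r⟩⟩
    cases r <;> rfl
  have h : Primrec fun a : ℕ × List (ℕ × ℕ) =>
      List.foldr (fun b s =>
        (fun (a : ℕ × List (ℕ × ℕ)) (z : (ℕ × ℕ) × Option (ℕ × ℕ)) =>
          if z.1.2 ≤ a.1 then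
            some (z.2.elim z.1 fun q => if q.2 ≤ z.1.2 then z.1 else q)
          else z.2) a (b, s)) none a.2 :=
    Primrec.list_foldr (Primrec.snd : Primrec fun a : ℕ × List (ℕ × ℕ) => a.2)
      (Primrec.const (none : Option (ℕ × ℕ))) hstep
  have h2 : Primrec fun a : ℕ × List (ℕ × ℕ) => pick a.1 a.2 := h.of_eq fun _ => rfl
  exact h2.to₂

lemma removeLen_primrec : Primrec₂ removeLen := by
  have hstep : Primrec₂ fun (a : ℕ × List (ℕ × ℕ)) (z : (ℕ × ℕ) × List (ℕ × ℕ)) =>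
      if z.1.2 = a.1 then z.2 else z.1 :: z.2 :=
    (Primrec.ite
      (PrimrecRel.comp Primrec.eq
        (Primrec.snd.comp (Primrec.fst.comp Primrec.snd)) (Primrec.fst.comp Primrec.fst))
      (Primrec.snd.comp Primrec.snd)
      (Primrec.list_cons.comp (Primrec.fst.comp Primrec.snd)
        (Primrec.snd.comp Primrec.snd))).to₂
  have h : Primrec fun a : ℕ × List (ℕ × ℕ) =>
      List.foldr (fun b s =>
        (fun (a : ℕ × List (ℕ × ℕ)) (z : (ℕ × ℕ) × List (ℕ × ℕ)) =>
          if z.1.2 = a.1 then z.2 else z.1 :: z.2) a (b, s)) [] a.2 :=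
    Primrec.list_foldr (Primrec.snd : Primrec fun a : ℕ × List (ℕ × ℕ) => a.2)
      (Primrec.const ([] : List (ℕ × ℕ))) hstep
  have h2 : Primrec fun a : ℕ × List (ℕ × ℕ) => removeLen a.1 a.2 := h.of_eq fun _ => rfl
  exact h2.to₂

lemma splits_primrec : Primrec fun z : (ℕ × ℕ) × ℕ => splits z.1.1 z.1.2 z.2 := by
  refine Primrec.list_map
    (Primrec.list_range.comp (Primrec.nat_sub.comp (Primrec.fst.comp Primrec.fst)
      (Primrec.snd.comp Primrec.fst)))
    ?_
  have h1 : Primrec fun w : ((ℕ × ℕ) × ℕ) × ℕ => (w.1.2 + 1) * 2 ^ (w.2 + 1) :=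
    Primrec.nat_mul.comp (Primrec.succ.comp (Primrec.snd.comp Primrec.fst))
      (pow_primrec.comp (Primrec.const 2) (Primrec.succ.comp Primrec.snd))
  have h2 : Primrec fun w : ((ℕ × ℕ) × ℕ) × ℕ => w.1.1.2 + w.2 + 1 :=
    Primrec.succ.comp (Primrec.nat_add.comp
      (Primrec.snd.comp (Primrec.fst.comp Primrec.fst)) Primrec.snd)
  exact (Primrec.pair h1 h2).to₂

lemma padw_primrec : Primrec fun z : (ℕ × ℕ) × ℕ => padw z.1.1 z.1.2 z.2 := by
  have h : Primrec fun z : (ℕ × ℕ) × ℕ => (z.2 + 1) * 2 ^ (z.1.1 - z.1.2) - 1 :=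
    Primrec.nat_sub.comp
      (Primrec.nat_mul.comp (Primrec.succ.comp Primrec.snd)
        (pow_primrec.comp (Primrec.const 2)
          (Primrec.nat_sub.comp (Primrec.fst.comp Primrec.fst)
            (Primrec.snd.comp Primrec.fst))))
      (Primrec.const 1)
  exact h.of_eq fun z => rfl

lemma stepState_primrec : Primrec₂ stepState := by
  have hg : Primrec₂ fun (a : Option (ℕ × ℕ) × List (ℕ × ℕ)) (q : ℕ × ℕ) =>
      (pick q.2 a.2).elim a.2 fun p => splits q.2 p.2 p.1 ++ removeLen p.2 a.2 := by
    have := Primrec.option_casesOn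
      (o := fun z : (Option (ℕ × ℕ) × List (ℕ × ℕ)) × (ℕ × ℕ) => pick z.2.2 z.1.2)
      (f := fun z => z.1.2)
      (g := fun z (p : ℕ × ℕ) => splits z.2.2 p.2 p.1 ++ removeLen p.2 z.1.2)
      (pick_primrec.comp (Primrec.snd.comp Primrec.snd) (Primrec.snd.comp Primrec.fst))
      (Primrec.snd.comp Primrec.fst)
      ((Primrec.list_append.comp
        (splits_primrec.comp (Primrec.pair
          (Primrec.pair (Primrec.snd.comp (Primrec.snd.comp Primrec.fst))
            (Primrec.snd.comp Primrec.snd))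
          (Primrec.fst.comp Primrec.snd)))
        (removeLen_primrec.comp (Primrec.snd.comp Primrec.snd)
          (Primrec.snd.comp (Primrec.fst.comp Primrec.fst)))).to₂)
    refine this.of_eq ?_
    rintro ⟨⟨o, L⟩, q⟩
    dsimp only
    cases pick q.2 L <;> rfl
  have := Primrec.option_casesOn
    (o := fun a : Option (ℕ × ℕ) × List (ℕ × ℕ) => a.1)
    (f := fun a => a.2)
    (g := fun a (q : ℕ × ℕ) =>
      (pick q.2 a.2).elim a.2 fun p => splits q.2 p.2 p.1 ++ removeLen p.2 a.2)
    Primrec.fst Primrec.snd hg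
  refine this.of_eq ?_
  rintro ⟨o, L⟩
  dsimp only
  cases o <;> rfl

variable {F : ℕ → ℕ → ℕ}

lemma reqv_computable (hF : Computable₂ F) (c0 : ℕ) : Computable (reqv F c0) := by
  have hx : Computable fun t : ℕ => t.unpair.1 :=
    (Primrec.fst.comp Primrec.unpair).to_comp
  have hs : Computable fun t : ℕ => t.unpair.2 :=
    (Primrec.snd.comp Primrec.unpair).to_comp
  have hs1 : Computable fun t : ℕ => t.unpair.2 - 1 :=
    (Primrec.nat_sub.comp (Primrec.snd.comp Primrec.unpair) (Primrec.const 1)).to_comp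
  have hFs : Computable fun t : ℕ => F t.unpair.1 t.unpair.2 := hF.comp hx hs
  have hF0 : Computable fun t : ℕ => F t.unpair.1 0 := hF.comp hx (Computable.const 0)
  have hFs1 : Computable fun t : ℕ => F t.unpair.1 (t.unpair.2 - 1) := hF.comp hx hs1
  have hadd : Computable₂ fun a b : ℕ => a + b := Primrec.nat_add.to_comp
  have hc1 : Computable fun t : ℕ => decide (t.unpair.2 = 0) :=
    (PrimrecRel.comp Primrec.eq (Primrec.snd.comp Primrec.unpair) (Primrec.const 0)).decide.to_comp
  have hlt : Computable₂ fun a b : ℕ => decide (a < b) := Primrec.nat_lt.decide.to_comp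
  have hc2 : Computable fun t : ℕ =>
      decide (F t.unpair.1 t.unpair.2 < F t.unpair.1 (t.unpair.2 - 1)) :=
    hlt.comp hFs hFs1
  have hb1 : Computable fun t : ℕ => some (t.unpair.1, F t.unpair.1 0 + c0) :=
    Computable.option_some.comp
      (Computable.pair hx (hadd.comp hF0 (Computable.const c0)))
  have hb2 : Computable fun t : ℕ => some (t.unpair.1, F t.unpair.1 t.unpair.2 + c0) :=
    Computable.option_some.comp
      (Computable.pair hx (hadd.comp hFs (Computable.const c0)))
  have h := Computable.cond hc1 hb1 (Computable.cond hc2 hb2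
    (Computable.const (none : Option (ℕ × ℕ))))
  refine h.of_eq fun t => ?_
  simp only [Bool.cond_decide]
  rfl

lemma state_computable (hF : Computable₂ F) (c0 : ℕ) : Computable (state F c0) := by
  have hh : Computable₂ fun (_ : ℕ) (p : ℕ × List (ℕ × ℕ)) =>
      stepState (reqv F c0 p.1) p.2 :=
    (stepState_primrec.to_comp.comp
      ((reqv_computable hF c0).comp (Computable.fst.comp Computable.snd))
      (Computable.snd.comp Computable.snd)).to₂
  have h := Computable.nat_rec (f := @id ℕ) Computable.id
    (Computable.const [((0 : ℕ), (0 : ℕ))]) hh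
  exact h.of_eq fun t => rfl

lemma asg_computable (hF : Computable₂ F) (c0 : ℕ) : Computable (asg F c0) := by
  have hpickmap : Computable fun z : ℕ × (ℕ × ℕ) => pick z.2.2 (state F c0 z.1) :=
    pick_primrec.to_comp.comp (Computable.snd.comp Computable.snd)
      ((state_computable hF c0).comp Computable.fst)
  have hp : Primrec fun w : (ℕ × (ℕ × ℕ)) × (ℕ × ℕ) =>
      (padw w.1.2.2 w.2.2 w.2.1, w.1.2.1) :=
    Primrec.pair
      (padw_primrec.comp (Primrec.pair
        (Primrec.pair (Primrec.snd.comp (Primrec.snd.comp Primrec.fst))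
          (Primrec.snd.comp Primrec.snd))
        (Primrec.fst.comp Primrec.snd)))
      (Primrec.fst.comp (Primrec.snd.comp Primrec.fst))
  have hgfun : Computable₂ fun (z : ℕ × (ℕ × ℕ)) (p : ℕ × ℕ) =>
      ((padw z.2.2 p.2 p.1, z.2.1) : ℕ × ℕ) := hp.to_comp.to₂
  have hmap : Computable fun z : ℕ × (ℕ × ℕ) =>
      (pick z.2.2 (state F c0 z.1)).map fun p => (padw z.2.2 p.2 p.1, z.2.1) :=
    Computable.option_map hpickmap hgfun
  have hg : Computable₂ fun (t : ℕ) (q : ℕ × ℕ) =>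
      (pick q.2 (state F c0 t)).map fun p => (padw q.2 p.2 p.1, q.1) := hmap.to₂
  exact (Computable.option_bind (reqv_computable hF c0) hg).of_eq fun t => rfl

lemma machine_partrec (hF : Computable₂ F) (c0 : ℕ) : Partrec (machine F c0) := by
  have hif0 : Primrec fun w : (ℕ × ℕ) × (ℕ × ℕ) =>
      if w.2.1 = w.1.1 then some w.2.2 else none :=
    Primrec.ite
      (PrimrecRel.comp Primrec.eq (Primrec.fst.comp Primrec.snd)
        (Primrec.fst.comp Primrec.fst))
      (Primrec.option_some.comp (Primrec.snd.comp Primrec.snd))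
      (Primrec.const (none : Option ℕ))
  have hif : Computable₂ fun (z : ℕ × ℕ) (r : ℕ × ℕ) =>
      if r.1 = z.1 then some r.2 else none := hif0.to_comp.to₂
  have hasg2 : Computable fun z : ℕ × ℕ => asg F c0 z.2 :=
    (asg_computable hF c0).comp Computable.snd
  have hcore0 : Computable fun z : ℕ × ℕ =>
      (asg F c0 z.2).bind fun r => if r.1 = z.1 then some r.2 else none :=
    Computable.option_bind hasg2 hif
  have hcore : Computable₂ fun (y t : ℕ) =>
      (asg F c0 t).bind fun r => if r.1 = y then some r.2 else none := hcore0.to₂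
  exact (Partrec.rfindOpt hcore).of_eq fun y => rfl

end Computability

end KCP
/-- Minimality of prefix-free complexity: if `A` is upper semicomputable and
`Σ 2^(−A x)` converges, then `K ≤ A + O(1)`. -/


theorem K_minimal (U' : ℕ →. ℕ) (hU' : PrefixOptimal U') (A : ℕ → ℕ)
    (h1 : UpperSemicomputable A)
    (h2 : Summable (fun x : ℕ => ((2 : ℝ))⁻¹ ^ A x)) :
    ∃ c, ∀ x, MachineCplx U' x ≤ A x + c := by
  classical
  obtain ⟨F, hF, hAnti, hAx⟩ := h1
  obtain ⟨c0, hc0⟩ : ∃ c0 : ℕ, 2 * (∑' x : ℕ, (2 : ℝ)⁻¹ ^ A x) ≤ 2 ^ c0 := by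
    obtain ⟨n, hn⟩ := exists_nat_gt (2 * ∑' x : ℕ, (2 : ℝ)⁻¹ ^ A x)
    refine ⟨n, hn.le.trans ?_⟩
    calc (n : ℝ) ≤ ((2 ^ n : ℕ) : ℝ) := by exact_mod_cast (Nat.lt_two_pow_self (n := n)).le
      _ = (2 : ℝ) ^ n := by push_cast; ring
  have hAF : ∀ x s, A x ≤ F x s := fun x s => by
    rw [hAx x]
    exact Nat.sInf_le ⟨s, rfl⟩
  have hb : ∀ N, KCP.G F c0 N ≤ 1 := KCP.G_le_one hAnti hAF h2 hc0
  have hpf : PrefixFree (KCP.machine F c0) := KCP.machine_prefixFree hb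
  have hpr : Partrec (KCP.machine F c0) := KCP.machine_partrec hF c0
  obtain ⟨c1, hc1⟩ := hU'.2.2 (KCP.machine F c0) hpr hpf
  refine ⟨c0 + c1, fun x => ?_⟩
  obtain ⟨t, hreq⟩ := KCP.req_exists hAnti hAx c0 x
  obtain ⟨y, hasg, hlen⟩ := KCP.asg_of_req hb (KCP.stinv_all hb t) hreq
  have hx : x ∈ KCP.machine F c0 y := KCP.mem_machine hb hasg
  have hfin := hc1 x y hx
  rw [hlen] at hfin
  omega
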